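/- Let X be a compact connected subset of ℝ^d with d ≥ 2. For any x, y ∈ X and ε > 0, there exists a finite sequence x = x₀, x₁, …, x_k = y of points of X with Σ_{i=0}^{k-1} ‖x_{i+1} − x_i‖^d < ε. -/

import Mathlib

open Metric MeasureTheory Set Filter

noncomputable section MatherAux

variable {d : ℕ}

/-- The set of achievable chain costs from `x` to `z` within `X`. -/
def matherCosts (d : ℕ) (X : Set (EuclideanSpace ℝ (Fin d)))
    (x z : EuclideanSpace ℝ (Fin d)) : Set ℝ :=
  {s | ∃ (k : ℕ) (c : ℕ → EuclideanSpace ℝ (Fin d)),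
      c 0 = x ∧ c k = z ∧ (∀ i ≤ k, c i ∈ X) ∧
      s = ∑ i ∈ Finset.range k, ‖c (i + 1) - c i‖ ^ d}

/-- Truncated infimal chain cost. -/
def matherH (d : ℕ) (X : Set (EuclideanSpace ℝ (Fin d)))
    (x z : EuclideanSpace ℝ (Fin d)) : ℝ :=
  sInf (insert 1 (matherCosts d X x z))

lemma matherCosts_nonneg {X : Set (EuclideanSpace ℝ (Fin d))}
    {x z : EuclideanSpace ℝ (Fin d)} {s : ℝ} (hs : s ∈ matherCosts d X x z) : 0 ≤ s := by
  obtain ⟨k, c, -, -, -, rfl⟩ := hs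
  exact Finset.sum_nonneg fun i _ => by positivity

lemma matherInsert_nonneg {X : Set (EuclideanSpace ℝ (Fin d))}
    {x z : EuclideanSpace ℝ (Fin d)} {s : ℝ}
    (hs : s ∈ insert 1 (matherCosts d X x z)) : 0 ≤ s := by
  rcases hs with rfl | hs
  · norm_num
  · exact matherCosts_nonneg hs

lemma matherBdd (X : Set (EuclideanSpace ℝ (Fin d)))
    (x z : EuclideanSpace ℝ (Fin d)) : BddBelow (insert 1 (matherCosts d X x z)) :=
  ⟨0, fun _ hs => matherInsert_nonneg hs⟩

lemma matherH_nonneg (X : Set (EuclideanSpace ℝ (Fin d)))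
    (x z : EuclideanSpace ℝ (Fin d)) : 0 ≤ matherH d X x z :=
  le_csInf ⟨1, mem_insert _ _⟩ fun _ hs => matherInsert_nonneg hs

lemma matherCosts_zero {X : Set (EuclideanSpace ℝ (Fin d))}
    {x : EuclideanSpace ℝ (Fin d)} (hx : x ∈ X) : (0 : ℝ) ∈ matherCosts d X x x :=
  ⟨0, fun _ => x, rfl, rfl, fun i hi => by simpa using hx, by simp⟩

lemma matherH_self {X : Set (EuclideanSpace ℝ (Fin d))}
    {x : EuclideanSpace ℝ (Fin d)} (hx : x ∈ X) : matherH d X x x = 0 :=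
  le_antisymm (csInf_le (matherBdd X x x) (mem_insert_of_mem _ (matherCosts_zero hx)))
    (matherH_nonneg X x x)

lemma matherCosts_step {X : Set (EuclideanSpace ℝ (Fin d))}
    {x z w : EuclideanSpace ℝ (Fin d)} (hw : w ∈ X) {s : ℝ}
    (hs : s ∈ matherCosts d X x z) : s + ‖w - z‖ ^ d ∈ matherCosts d X x w := by
  obtain ⟨k, c, h0, hk, hmem, rfl⟩ := hs
  refine ⟨k + 1, fun i => if i ≤ k then c i else w, by simpa using h0, by simp, ?_, ?_⟩
  · intro i hi
    by_cases h : i ≤ k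
    · simpa [h] using hmem i h
    · simp [h, hw]
  · rw [Finset.sum_range_succ]
    congr 1
    · apply Finset.sum_congr rfl
      intro i hi
      have hi' : i < k := Finset.mem_range.mp hi
      simp [hi'.le, Nat.succ_le_of_lt hi']
    · simp [hk]

lemma matherH_le_add {X : Set (EuclideanSpace ℝ (Fin d))}
    {x z w : EuclideanSpace ℝ (Fin d)} (hw : w ∈ X) :
    matherH d X x w ≤ matherH d X x z + ‖w - z‖ ^ d := by
  have key : ∀ a ∈ insert 1 (matherCosts d X x z),
      matherH d X x w - ‖w - z‖ ^ d ≤ a := by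
    intro a ha
    rcases ha with rfl | ha
    · have h1 : matherH d X x w ≤ 1 := csInf_le (matherBdd X x w) (mem_insert _ _)
      have : (0:ℝ) ≤ ‖w - z‖ ^ d := by positivity
      linarith
    · have h1 : matherH d X x w ≤ a + ‖w - z‖ ^ d :=
        csInf_le (matherBdd X x w) (mem_insert_of_mem _ (matherCosts_step hw ha))
      linarith
    
  have := le_csInf (s := insert 1 (matherCosts d X x z)) ⟨1, mem_insert _ _⟩ key
  have h2 : matherH d X x w - ‖w - z‖ ^ d ≤ matherH d X x z := this
  linarith

lemma matherH_abs_le {X : Set (EuclideanSpace ℝ (Fin d))}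
    {x z w : EuclideanSpace ℝ (Fin d)} (hz : z ∈ X) (hw : w ∈ X) :
    |matherH d X x w - matherH d X x z| ≤ ‖w - z‖ ^ d := by
  rw [abs_sub_le_iff]
  constructor
  · linarith [matherH_le_add (x := x) (z := z) hw]
  · have := matherH_le_add (x := x) (z := w) hz
    rw [norm_sub_rev] at this
    linarith

lemma matherH_telescope {X : Set (EuclideanSpace ℝ (Fin d))}
    {x : EuclideanSpace ℝ (Fin d)} (u : ℕ → EuclideanSpace ℝ (Fin d)) (n : ℕ)
    (hu : ∀ j ≤ n, u j ∈ X) :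
    |matherH d X x (u n) - matherH d X x (u 0)| ≤
      ∑ j ∈ Finset.range n, ‖u (j + 1) - u j‖ ^ d := by
  induction n with
  | zero => simp
  | succ n ih =>
    have h1 := ih fun j hj => hu j (hj.trans (Nat.le_succ n))
    have h2 : |matherH d X x (u (n+1)) - matherH d X x (u n)| ≤ ‖u (n+1) - u n‖ ^ d :=
      matherH_abs_le (hu n (Nat.le_succ n)) (hu (n+1) le_rfl)
    rw [Finset.sum_range_succ]
    calc |matherH d X x (u (n+1)) - matherH d X x (u 0)|
        ≤ |matherH d X x (u (n+1)) - matherH d X x (u n)| +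
          |matherH d X x (u n) - matherH d X x (u 0)| := abs_sub_le _ _ _
      _ ≤ _ := by linarith

lemma matherH_continuousOn (hd : 1 ≤ d) (X : Set (EuclideanSpace ℝ (Fin d)))
    (x : EuclideanSpace ℝ (Fin d)) : ContinuousOn (matherH d X x) X := by
  rw [Metric.continuousOn_iff]
  intro z hz ε hε
  refine ⟨min 1 ε, by positivity, fun w hw hdist => ?_⟩
  rw [Real.dist_eq]
  have hnorm : ‖w - z‖ < min 1 ε := by
    rwa [← dist_eq_norm]
  calc |matherH d X x w - matherH d X x z| ≤ ‖w - z‖ ^ d := matherH_abs_le hz hw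
    _ ≤ ‖w - z‖ := by
        apply pow_le_of_le_one (norm_nonneg _) (hnorm.le.trans (min_le_left _ _))
        omega
    _ < ε := hnorm.trans_le (min_le_right _ _)


open scoped ENNReal NNReal

lemma matherH_osc (hd : 2 ≤ d) {X : Set (EuclideanSpace ℝ (Fin d))}
    {x p : EuclideanSpace ℝ (Fin d)} (hp : p ∈ X) {t η : ℝ}
    (ht : 0 < t) (hη : 0 < η) (hη1 : η ≤ 1)
    (hdense : ∀ w ∈ closedBall p (2 * t), ∃ u ∈ X, dist u w ≤ η * t) :
    ∀ z ∈ X ∩ closedBall p t,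
      |matherH d X x z - matherH d X x p| ≤ 3 ^ (d + 1) * η * t ^ d := by
  rintro z ⟨hzX, hzB⟩
  set L := dist z p with hL
  have hLt : L ≤ t := mem_closedBall.mp hzB
  have hL0 : 0 ≤ L := dist_nonneg
  have hηt : 0 < η * t := by positivity
  set n : ℕ := max 1 ⌈L / (η * t)⌉₊ with hn
  have hn1 : 1 ≤ n := le_max_left _ _
  have hn0 : (0:ℝ) < n := by exact_mod_cast hn1
  have hnge : L / (η * t) ≤ (n : ℝ) := by
    calc L / (η * t) ≤ (⌈L / (η * t)⌉₊ : ℝ) := Nat.le_ceil _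
      _ ≤ (n : ℝ) := by exact_mod_cast le_max_right _ _
  have hnle : (n : ℝ) ≤ 2 / η := by
    have h1 : (⌈L / (η * t)⌉₊ : ℝ) < L / (η * t) + 1 := Nat.ceil_lt_add_one (by positivity)
    have h2 : L / (η * t) ≤ 1 / η := by
      have ht' : t / (η * t) = 1 / η := by
        rw [mul_comm]
        field_simp
      rw [← ht']
      gcongr
    have h3 : 1 / η + 1 ≤ 2 / η := by
      rw [div_add' _ _ _ hη.ne', div_le_div_iff₀ hη hη]
      nlinarith
    have h4 : (1:ℝ) ≤ 2 / η := by
      rw [le_div_iff₀ hη]; linarith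
    have : (n:ℝ) = max 1 (⌈L / (η * t)⌉₊ : ℝ) := by
      simp [hn, Nat.cast_max]
    rw [this, max_le_iff]
    constructor
    · exact h4
    · linarith
  -- segment sample points
  set w : ℕ → EuclideanSpace ℝ (Fin d) := fun j => p + ((j : ℝ) / (n : ℝ)) • (z - p) with hw
  have hw0 : w 0 = p := by simp [hw]
  have hwn : w n = z := by
    simp only [hw]
    rw [div_self hn0.ne']
    simp
  have hwmem : ∀ j ≤ n, w j ∈ closedBall p t := by
    intro j hj
    simp only [hw, mem_closedBall]
    rw [dist_eq_norm]
    have : p + ((j : ℝ) / (n : ℝ)) • (z - p) - p = ((j : ℝ) / (n : ℝ)) • (z - p) := by abel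
    rw [this, norm_smul]
    have hj1 : (j : ℝ) / (n : ℝ) ≤ 1 := by
      rw [div_le_one hn0]; exact_mod_cast hj
    have hj0 : (0:ℝ) ≤ (j : ℝ) / (n : ℝ) := by positivity
    calc ‖(j : ℝ) / (n : ℝ)‖ * ‖z - p‖ ≤ 1 * ‖z - p‖ := by
          apply mul_le_mul_of_nonneg_right _ (norm_nonneg _)
          rw [Real.norm_eq_abs, abs_of_nonneg hj0]; exact hj1
      _ = L := by rw [one_mul, hL, dist_eq_norm]
      _ ≤ t := hLt
  have hwstep : ∀ j, dist (w (j+1)) (w j) ≤ η * t := by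
    intro j
    rw [dist_eq_norm]
    have : w (j+1) - w j = ((1 : ℝ) / (n : ℝ)) • (z - p) := by
      simp only [hw]
      rw [add_sub_add_left_eq_sub, ← sub_smul]
      congr 1
      have hne : (n:ℝ) ≠ 0 := hn0.ne'
      push_cast
      field_simp
      ring
    rw [this, norm_smul, Real.norm_eq_abs, abs_of_nonneg (by positivity)]
    rw [div_mul_eq_mul_div, one_mul, div_le_iff₀ hn0]
    rw [div_le_iff₀ hηt] at hnge
    calc ‖z - p‖ = L := by rw [hL, dist_eq_norm]
      _ ≤ (n:ℝ) * (η * t) := hnge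
      _ = η * t * n := by ring
  -- choose nearby points of X
  have hex : ∀ j, ∃ u, u ∈ X ∧ dist u (w (min j n)) ≤ η * t := by
    intro j
    have : w (min j n) ∈ closedBall p (2 * t) := by
      apply closedBall_subset_closedBall (by linarith) (hwmem _ (min_le_right _ _))
    obtain ⟨u, hu, hud⟩ := hdense _ this
    exact ⟨u, hu, hud⟩
  set v : ℕ → EuclideanSpace ℝ (Fin d) := fun j => (hex j).choose with hv
  have hvspec : ∀ j, v j ∈ X ∧ dist (v j) (w (min j n)) ≤ η * t := fun j => (hex j).choose_spec
  set u : ℕ → EuclideanSpace ℝ (Fin d) :=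
    fun j => if j = 0 then p else if n ≤ j then z else v j with hu
  have hu0 : u 0 = p := by simp [hu]
  have hun : u n = z := by
    have hnne : n ≠ 0 := by omega
    simp only [hu]
    rw [if_neg hnne, if_pos le_rfl]
  have humem : ∀ j ≤ n, u j ∈ X := by
    intro j hj
    simp only [hu]
    split
    · exact hp
    · split
      · exact hzX
      · exact (hvspec j).1
  have huw : ∀ j ≤ n, dist (u j) (w j) ≤ η * t := by
    intro j hj
    rcases eq_or_ne j 0 with rfl | hj0
    · simp [hu0, hw0, hηt.le]
    rcases eq_or_ne j n with rfl | hjn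
    · simp only [hun, hwn]
      simp [hηt.le]
    · have hjlt : j < n := lt_of_le_of_ne hj hjn
      have : u j = v j := by simp [hu, hj0, not_le.mpr hjlt]
      rw [this]
      have := (hvspec j).2
      rwa [min_eq_left hj] at this
  have hustep : ∀ j < n, dist (u (j+1)) (u j) ≤ 3 * (η * t) := by
    intro j hj
    calc dist (u (j+1)) (u j)
        ≤ dist (u (j+1)) (w (j+1)) + dist (w (j+1)) (w j) + dist (w j) (u j) :=
          dist_triangle4 _ _ _ _
      _ ≤ η * t + η * t + η * t := by
          gcongr
          · exact huw _ (by omega)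
          · exact hwstep j
          · rw [dist_comm]; exact huw _ (by omega)
      _ = 3 * (η * t) := by ring
  -- telescope
  have htel := matherH_telescope (X := X) (x := x) u n humem
  rw [hu0, hun] at htel
  have hsum : ∑ j ∈ Finset.range n, ‖u (j + 1) - u j‖ ^ d ≤ (n : ℝ) * (3 * (η * t)) ^ d := by
    calc ∑ j ∈ Finset.range n, ‖u (j + 1) - u j‖ ^ d
        ≤ ∑ _j ∈ Finset.range n, (3 * (η * t)) ^ d := by
          apply Finset.sum_le_sum
          intro j hj
          apply pow_le_pow_left₀ (norm_nonneg _)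
          rw [← dist_eq_norm]
          exact hustep j (Finset.mem_range.mp hj)
      _ = (n : ℝ) * (3 * (η * t)) ^ d := by
          rw [Finset.sum_const, Finset.card_range, nsmul_eq_mul]
  have harith : (n : ℝ) * (3 * (η * t)) ^ d ≤ 3 ^ (d + 1) * η * t ^ d := by
    have hpow : (3 * (η * t)) ^ d = 3 ^ d * (η ^ d * t ^ d) := by
      rw [mul_pow, mul_pow]
    have hηd : η ^ d = η ^ (d - 1) * η := by
      rw [← pow_succ]
      congr 1
      omega
    have hηd1 : η ^ (d - 1) ≤ η := by
      calc η ^ (d - 1) ≤ η ^ 1 := by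
            apply pow_le_pow_of_le_one hη.le hη1
            omega
        _ = η := pow_one η
    calc (n : ℝ) * (3 * (η * t)) ^ d ≤ (2 / η) * (3 * (η * t)) ^ d := by
          apply mul_le_mul_of_nonneg_right hnle (by positivity)
      _ = 2 * 3 ^ d * η ^ (d-1) * t ^ d := by
          rw [hpow, hηd, div_mul_eq_mul_div, div_eq_iff hη.ne']
          ring
      _ ≤ 2 * 3 ^ d * η * t ^ d := by
          have h3 : (0:ℝ) ≤ 2 * 3 ^ d := by positivity
          have h4 : (0:ℝ) ≤ t ^ d := by positivity
          exact mul_le_mul_of_nonneg_right (mul_le_mul_of_nonneg_left hηd1 h3) h4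
      _ ≤ 3 ^ (d + 1) * η * t ^ d := by
          have h5 : (2:ℝ) * 3 ^ d ≤ 3 ^ d * 3 := by
            have : (0:ℝ) < 3 ^ d := by positivity
            linarith
          calc 2 * 3 ^ d * η * t ^ d = (2 * 3 ^ d) * (η * t ^ d) := by ring
            _ ≤ (3 ^ d * 3) * (η * t ^ d) := mul_le_mul_of_nonneg_right h5 (by positivity)
            _ = 3 ^ (d + 1) * η * t ^ d := by rw [pow_succ]; ring
  linarith

lemma mather_good_radii {d : ℕ} {X : Set (EuclideanSpace ℝ (Fin d))}
    (hX : MeasurableSet X) {p : EuclideanSpace ℝ (Fin d)}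
    (hp : Tendsto (fun r => volume (X ∩ closedBall p r) / volume (closedBall p r))
      (nhdsWithin 0 (Set.Ioi 0)) (nhds 1))
    {η : ℝ} (hη : 0 < η) (hη1 : η ≤ 1) :
    ∀ᶠ t in nhdsWithin (0:ℝ) (Set.Ioi 0),
      ∀ w ∈ closedBall p (2 * t), ∃ u ∈ X, dist u w ≤ η * t := by
  set Bu := volume (ball (0 : EuclideanSpace ℝ (Fin d)) 1) with hBu
  have hBu0 : Bu ≠ 0 := (measure_ball_pos _ _ one_pos).ne'
  have hBufin : Bu ≠ ⊤ := measure_ball_lt_top.ne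
  set c : ℝ≥0∞ := ENNReal.ofReal ((η / 4) ^ d / 2) with hc
  have hc0 : c ≠ 0 := by
    rw [hc, Ne, ENNReal.ofReal_eq_zero, not_le]
    positivity
  have hc1 : c ≤ 1 := by
    rw [hc]
    apply ENNReal.ofReal_le_one.mpr
    have h1 : (η / 4) ^ d ≤ 1 := pow_le_one₀ (by positivity) (by linarith)
    linarith
  have hlt1 : (1 : ℝ≥0∞) - c < 1 := ENNReal.sub_lt_self ENNReal.one_ne_top one_ne_zero hc0
  have hev := hp.eventually (eventually_gt_nhds hlt1)
  have h4 : Tendsto (fun t : ℝ => 4 * t) (nhdsWithin 0 (Set.Ioi 0))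
      (nhdsWithin 0 (Set.Ioi 0)) := by
    rw [tendsto_nhdsWithin_iff]
    constructor
    · have hcont : Continuous fun t : ℝ => 4 * t := by continuity
      have h := hcont.tendsto (0 : ℝ)
      simpa using h.mono_left nhdsWithin_le_nhds
    · filter_upwards [self_mem_nhdsWithin] with t ht
      exact mul_pos four_pos (mem_Ioi.mp ht)
  filter_upwards [h4.eventually hev, self_mem_nhdsWithin] with t hratio ht
  have ht' : (0:ℝ) < t := ht
  intro w hw
  set B := closedBall p (4 * t) with hBdef
  have hB : volume B = ENNReal.ofReal ((4 * t) ^ d) * Bu := by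
    rw [hBdef, Measure.addHaar_closedBall volume p (by positivity), finrank_euclideanSpace_fin,
      hBu]
  have hB0 : volume B ≠ 0 := (measure_closedBall_pos _ _ (by positivity)).ne'
  have hBfin : volume B ≠ ⊤ := measure_closedBall_lt_top.ne
  have h1 : (1 - c) * volume B ≤ volume (X ∩ B) :=
    (ENNReal.le_div_iff_mul_le (Or.inl hB0) (Or.inl hBfin)).mp hratio.le
  have h2 : volume (B \ X) ≤ c * volume B := by
    have hdiff : volume (B \ X) = volume B - volume (X ∩ B) := by
      rw [← Set.diff_inter_self_eq_diff (t := X)]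
      rw [measure_diff Set.inter_subset_right (hX.inter (measurableSet_closedBall)).nullMeasurableSet
        (ne_top_of_le_ne_top hBfin (measure_mono Set.inter_subset_right))]
    have hsum : volume B = c * volume B + (1 - c) * volume B := by
      rw [← add_mul]
      rw [add_tsub_cancel_of_le hc1, one_mul]
    rw [hdiff]
    calc volume B - volume (X ∩ B) ≤ volume B - (1 - c) * volume B :=
          tsub_le_tsub_left h1 _
      _ = c * volume B := by
          have hfin2 : (1 - c) * volume B ≠ ⊤ := by
            apply ne_top_of_le_ne_top hBfin
            calc (1 - c) * volume B ≤ 1 * volume B :=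
                  mul_le_mul_left tsub_le_self _
              _ = volume B := one_mul _
          exact ENNReal.sub_eq_of_eq_add hfin2 hsum
  have hkey : c * ENNReal.ofReal ((4 * t) ^ d) = ENNReal.ofReal ((η * t) ^ d / 2) := by
    rw [hc, ← ENNReal.ofReal_mul (by positivity)]
    congr 1
    rw [div_mul_eq_mul_div, ← mul_pow]
    have : η / 4 * (4 * t) = η * t := by ring
    rw [this]
  have h3 : c * volume B < ENNReal.ofReal ((η * t) ^ d) * Bu := by
    rw [hB, ← mul_assoc, hkey]
    apply (ENNReal.mul_lt_mul_iff_left hBu0 hBufin).mpr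
    apply ENNReal.ofReal_lt_ofReal_iff (by positivity) |>.mpr
    have hpos : (0:ℝ) < (η * t) ^ d := by positivity
    linarith
  have hmb : volume (B \ X) < ENNReal.ofReal ((η * t) ^ d) * Bu := h2.trans_lt h3
  have hvol_ball : volume (ball w (η * t)) = ENNReal.ofReal ((η * t) ^ d) * Bu := by
    rw [Measure.addHaar_ball_of_pos volume w (by positivity), finrank_euclideanSpace_fin, hBu]
  have hball : ball w (η * t) ⊆ B := by
    intro q hq
    rw [hBdef, mem_closedBall]
    have h5 : dist q w < η * t := mem_ball.mp hq
    have h6 : dist w p ≤ 2 * t := mem_closedBall.mp hw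
    calc dist q p ≤ dist q w + dist w p := dist_triangle _ _ _
      _ ≤ η * t + 2 * t := by linarith
      _ ≤ 4 * t := by nlinarith
  by_contra hcon
  push_neg at hcon
  have hsub : ball w (η * t) ⊆ B \ X := by
    intro q hq
    refine ⟨hball hq, fun hqX => ?_⟩
    exact absurd (mem_ball.mp hq) (not_lt.mpr (hcon q hqX).le)
  have := (measure_mono hsub).trans_lt hmb
  rw [hvol_ball] at this
  exact lt_irrefl _ this

theorem matherH_main {d : ℕ} (hd : 2 ≤ d) (X : Set (EuclideanSpace ℝ (Fin d)))
    (hXc : IsCompact X) (hXconn : IsConnected X)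
    (x y : EuclideanSpace ℝ (Fin d)) (hx : x ∈ X) (hy : y ∈ X) :
    matherH d X x y = 0 := by
  classical
  have hXmeas : MeasurableSet X := hXc.isClosed.measurableSet
  set f : EuclideanSpace ℝ (Fin d) → ℝ := matherH d X x with hf
  set M : ℝ := f y with hM
  have hM0 : 0 ≤ M := matherH_nonneg X x y
  set Bu : ℝ≥0∞ := volume (ball (0 : EuclideanSpace ℝ (Fin d)) 1) with hBu
  have hBu0 : Bu ≠ 0 := (measure_ball_pos _ _ one_pos).ne'
  have hBufin : Bu ≠ ⊤ := measure_ball_lt_top.ne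
  have hXfin : volume X ≠ ⊤ := hXc.measure_lt_top.ne
  -- good and bad sets
  set P : EuclideanSpace ℝ (Fin d) → Prop := fun p =>
    Tendsto (fun r => volume (X ∩ closedBall p r) / volume (closedBall p r))
      (nhdsWithin 0 (Set.Ioi 0)) (nhds 1) with hP
  have hae : ∀ᵐ p ∂(volume.restrict X), P p := Besicovitch.ae_tendsto_measure_inter_div volume X
  set N : Set (EuclideanSpace ℝ (Fin d)) := toMeasurable (volume.restrict X) {p | ¬ P p} with hN
  have hNmeas : MeasurableSet N := measurableSet_toMeasurable _ _
  have hNnull : (volume.restrict X) N = 0 := by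
    rw [hN, measure_toMeasurable]
    exact hae
  have hZ0 : volume (X ∩ N) = 0 := by
    rw [Measure.restrict_apply hNmeas] at hNnull
    rwa [Set.inter_comm]
  have hGP : ∀ p ∈ X \ N, P p := by
    intro p hp
    by_contra hc
    exact hp.2 (subset_toMeasurable _ _ hc)
  set G : Set (EuclideanSpace ℝ (Fin d)) := X \ N with hG
  set Z : Set (EuclideanSpace ℝ (Fin d)) := X ∩ N with hZdef
  -- interval inside image
  have hIcc : Icc (0:ℝ) M ⊆ f '' X := by
    have := hXconn.isPreconnected.intermediate_value hx hy
      (matherH_continuousOn (by omega) X x)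
    rwa [matherH_self hx] at this
  -- MASTER inequality
  have master : ∀ η : ℝ, 0 < η → η ≤ 1 → ∀ ε' : ℝ≥0∞, ε' ≠ 0 →
      ENNReal.ofReal M * Bu ≤
        ENNReal.ofReal (2 * 3 ^ (d + 1) * η) * (volume X + ε') + 2 * ε' := by
    intro η hη hη1 ε' hε'
    -- admissible radii for good points
    set fG : EuclideanSpace ℝ (Fin d) → Set ℝ := fun p =>
      {t | 0 < t ∧ ∀ w ∈ closedBall p (2 * t), ∃ u ∈ X, dist u w ≤ η * t} with hfGdef
    have hfG : ∀ p ∈ G, ∀ δ > 0, (fG p ∩ Ioo 0 δ).Nonempty := by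
      intro p hpG δ hδ
      have hev := mather_good_radii hXmeas (hGP p hpG) hη hη1
      have hIoo : Ioo (0:ℝ) δ ∈ nhdsWithin (0:ℝ) (Set.Ioi 0) :=
        Ioo_mem_nhdsGT_of_mem ⟨le_refl 0, hδ⟩
      obtain ⟨t, htd, htIoo⟩ := (hev.and (eventually_of_mem hIoo fun t ht => ht)).exists
      exact ⟨t, ⟨htIoo.1, htd⟩, htIoo⟩
    obtain ⟨tG, rG, htGcount, htGsub, htGmem, htGcov, htGsum⟩ :=
      Besicovitch.exists_closedBall_covering_tsum_measure_le volume hε' fG G hfG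
    have hfZ : ∀ p ∈ Z, ∀ δ > 0, ((Set.Ioi (0:ℝ)) ∩ Ioo 0 δ).Nonempty :=
      fun p _ δ hδ => ⟨δ/2, half_pos hδ, half_pos hδ, half_lt_self hδ⟩
    obtain ⟨tZ, rZ, htZcount, htZsub, htZmem, htZcov, htZsum⟩ :=
      Besicovitch.exists_closedBall_covering_tsum_measure_le volume hε'
        (fun _ => Set.Ioi (0:ℝ)) Z hfZ
    -- image inclusion
    have himg : f '' X ⊆
        (⋃ p ∈ tG, f '' (X ∩ closedBall p (rG p))) ∪
        (⋃ p ∈ tZ, f '' (X ∩ closedBall p (rZ p))) := by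
      rintro - ⟨q, hqX, rfl⟩
      by_cases hqN : q ∈ N
      · have hqZ : q ∈ Z := ⟨hqX, hqN⟩
        obtain ⟨p, hp⟩ := Set.mem_iUnion₂.mp (htZcov hqZ)
        exact Or.inr (Set.mem_iUnion₂.mpr ⟨p, hp.1, Set.mem_image_of_mem f ⟨hqX, hp.2⟩⟩)
      · have hqG : q ∈ G := ⟨hqX, hqN⟩
        obtain ⟨p, hp⟩ := Set.mem_iUnion₂.mp (htGcov hqG)
        exact Or.inl (Set.mem_iUnion₂.mpr ⟨p, hp.1, Set.mem_image_of_mem f ⟨hqX, hp.2⟩⟩)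
    -- measure bound
    have hstep1 : ENNReal.ofReal M ≤
        (∑' p : tG, volume (f '' (X ∩ closedBall p.1 (rG p.1)))) +
        (∑' p : tZ, volume (f '' (X ∩ closedBall p.1 (rZ p.1)))) := by
      calc ENNReal.ofReal M = volume (Icc (0:ℝ) M) := by
            rw [Real.volume_Icc, sub_zero]
        _ ≤ volume (f '' X) := measure_mono hIcc
        _ ≤ volume ((⋃ p ∈ tG, f '' (X ∩ closedBall p (rG p))) ∪
              (⋃ p ∈ tZ, f '' (X ∩ closedBall p (rZ p)))) := measure_mono himg
        _ ≤ volume (⋃ p ∈ tG, f '' (X ∩ closedBall p (rG p))) +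
              volume (⋃ p ∈ tZ, f '' (X ∩ closedBall p (rZ p))) := measure_union_le _ _
        _ ≤ _ := by
            gcongr
            · exact measure_biUnion_le volume htGcount _
            · exact measure_biUnion_le volume htZcount _
    -- per ball bounds, multiplied by Bu
    have hgoodball : ∀ p ∈ tG,
        volume (f '' (X ∩ closedBall p (rG p))) * Bu ≤
          ENNReal.ofReal (2 * 3 ^ (d + 1) * η) * volume (closedBall p (rG p)) := by
      intro p hp
      have hpG : p ∈ G := htGsub hp
      have hpX : p ∈ X := hpG.1
      obtain ⟨ht0, hdense⟩ := htGmem p hp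
      set t := rG p
      have hosc := matherH_osc (x := x) hd hpX ht0 hη hη1 hdense
      have hsub : f '' (X ∩ closedBall p t) ⊆
          Icc (f p - 3 ^ (d + 1) * η * t ^ d) (f p + 3 ^ (d + 1) * η * t ^ d) := by
        rintro - ⟨q, hq, rfl⟩
        have := hosc q hq
        rw [abs_le] at this
        constructor <;> linarith [this.1, this.2]
      calc volume (f '' (X ∩ closedBall p t)) * Bu
          ≤ volume (Icc (f p - 3 ^ (d + 1) * η * t ^ d) (f p + 3 ^ (d + 1) * η * t ^ d)) * Bu :=
            mul_le_mul_left (measure_mono hsub) _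
        _ = ENNReal.ofReal (2 * 3 ^ (d + 1) * η) * (ENNReal.ofReal (t ^ d) * Bu) := by
            rw [Real.volume_Icc]
            have harith : f p + 3 ^ (d + 1) * η * t ^ d - (f p - 3 ^ (d + 1) * η * t ^ d)
                = (2 * 3 ^ (d + 1) * η) * t ^ d := by ring
            rw [harith, ENNReal.ofReal_mul (by positivity), mul_assoc]
        _ = ENNReal.ofReal (2 * 3 ^ (d + 1) * η) * volume (closedBall p t) := by
            rw [Measure.addHaar_closedBall volume p ht0.le, finrank_euclideanSpace_fin]
    have hbadball : ∀ p ∈ tZ,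
        volume (f '' (X ∩ closedBall p (rZ p))) * Bu ≤ 2 * volume (closedBall p (rZ p)) := by
      intro p hp
      have hpX : p ∈ X := (htZsub hp).1
      have ht0 : (0:ℝ) < rZ p := htZmem p hp
      set t := rZ p
      have hsub : f '' (X ∩ closedBall p t) ⊆ Icc (f p - t ^ d) (f p + t ^ d) := by
        rintro - ⟨q, hq, rfl⟩
        have h1 : |f q - f p| ≤ ‖q - p‖ ^ d := matherH_abs_le (x := x) hpX hq.1
        have h2 : ‖q - p‖ ≤ t := by
          rw [← dist_eq_norm]
          exact mem_closedBall.mp hq.2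
        have h3 : ‖q - p‖ ^ d ≤ t ^ d := pow_le_pow_left₀ (norm_nonneg _) h2 d
        rw [abs_le] at h1
        constructor <;> linarith [h1.1, h1.2]
      calc volume (f '' (X ∩ closedBall p t)) * Bu
          ≤ volume (Icc (f p - t ^ d) (f p + t ^ d)) * Bu :=
            mul_le_mul_left (measure_mono hsub) _
        _ = 2 * (ENNReal.ofReal (t ^ d) * Bu) := by
            rw [Real.volume_Icc]
            have harith : f p + t ^ d - (f p - t ^ d) = 2 * t ^ d := by ring
            rw [harith, ENNReal.ofReal_mul (by norm_num), mul_assoc]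
            norm_num
        _ = 2 * volume (closedBall p t) := by
            rw [Measure.addHaar_closedBall volume p ht0.le, finrank_euclideanSpace_fin]
    -- put everything together
    calc ENNReal.ofReal M * Bu
        ≤ ((∑' p : tG, volume (f '' (X ∩ closedBall p.1 (rG p.1)))) +
           (∑' p : tZ, volume (f '' (X ∩ closedBall p.1 (rZ p.1))))) * Bu := by
          gcongr
      _ = (∑' p : tG, volume (f '' (X ∩ closedBall p.1 (rG p.1))) * Bu) +
          (∑' p : tZ, volume (f '' (X ∩ closedBall p.1 (rZ p.1))) * Bu) := by
          rw [add_mul, ENNReal.tsum_mul_right, ENNReal.tsum_mul_right]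
      _ ≤ (∑' p : tG, ENNReal.ofReal (2 * 3 ^ (d + 1) * η) * volume (closedBall p.1 (rG p.1))) +
          (∑' p : tZ, 2 * volume (closedBall p.1 (rZ p.1))) :=
          add_le_add (ENNReal.tsum_le_tsum fun p => hgoodball p p.2)
            (ENNReal.tsum_le_tsum fun p => hbadball p p.2)
      _ = ENNReal.ofReal (2 * 3 ^ (d + 1) * η) * (∑' p : tG, volume (closedBall p.1 (rG p.1))) +
          2 * (∑' p : tZ, volume (closedBall p.1 (rZ p.1))) := by
          rw [ENNReal.tsum_mul_left, ENNReal.tsum_mul_left]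
      _ ≤ ENNReal.ofReal (2 * 3 ^ (d + 1) * η) * (volume G + ε') + 2 * (volume Z + ε') := by
          gcongr
      _ ≤ ENNReal.ofReal (2 * 3 ^ (d + 1) * η) * (volume X + ε') + 2 * ε' := by
          have hZ0' : volume Z = 0 := hZ0
          rw [hZ0', zero_add]
          gcongr
          exact Set.diff_subset
  -- convert to real
  have masterR : ∀ η : ℝ, 0 < η → η ≤ 1 → ∀ ε'' : ℝ, 0 < ε'' →
      M * Bu.toReal ≤ (2 * 3 ^ (d + 1) * η) * ((volume X).toReal + ε'') + 2 * ε'' := by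
    intro η hη hη1 ε'' hε''
    have h := master η hη hη1 (ENNReal.ofReal ε'')
      (by rw [Ne, ENNReal.ofReal_eq_zero]; exact not_le.mpr hε'')
    have hRfin : ENNReal.ofReal (2 * 3 ^ (d + 1) * η) * (volume X + ENNReal.ofReal ε'') +
        2 * ENNReal.ofReal ε'' ≠ ⊤ := by
      apply ENNReal.add_ne_top.mpr
      constructor
      · exact ENNReal.mul_ne_top ENNReal.ofReal_ne_top
          (ENNReal.add_ne_top.mpr ⟨hXfin, ENNReal.ofReal_ne_top⟩)
      · exact ENNReal.mul_ne_top (by norm_num) ENNReal.ofReal_ne_top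
    have := ENNReal.toReal_mono hRfin h
    rw [ENNReal.toReal_mul, ENNReal.toReal_ofReal hM0] at this
    rw [ENNReal.toReal_add (ENNReal.mul_ne_top ENNReal.ofReal_ne_top
          (ENNReal.add_ne_top.mpr ⟨hXfin, ENNReal.ofReal_ne_top⟩))
        (ENNReal.mul_ne_top (by norm_num) ENNReal.ofReal_ne_top),
      ENNReal.toReal_mul, ENNReal.toReal_mul,
      ENNReal.toReal_add hXfin ENNReal.ofReal_ne_top,
      ENNReal.toReal_ofReal (by positivity), ENNReal.toReal_ofReal hε''.le] at this
    simpa using this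
  -- endgame
  by_contra hMne
  have hMpos : 0 < M := lt_of_le_of_ne hM0 (Ne.symm hMne)
  set b : ℝ := Bu.toReal with hb
  have hbpos : 0 < b := ENNReal.toReal_pos hBu0 hBufin
  set v : ℝ := (volume X).toReal with hv
  have hv0 : 0 ≤ v := ENNReal.toReal_nonneg
  set K : ℝ := 2 * 3 ^ (d + 1) with hK
  have hKpos : 0 < K := by positivity
  set η : ℝ := min 1 (M * b / (4 * K * (v + 1))) with hη
  have hηpos : 0 < η := lt_min one_pos (by positivity)
  have hη1 : η ≤ 1 := min_le_left _ _
  set ε'' : ℝ := min 1 (M * b / 8) with hε''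
  have hε''pos : 0 < ε'' := lt_min one_pos (by positivity)
  have h := masterR η hηpos hη1 ε'' hε''pos
  have hK0 : K ≠ 0 := hKpos.ne'
  have hv1pos : (0:ℝ) < v + 1 := by linarith
  have hA : K * η * (v + ε'') ≤ M * b / 4 := by
    have he1 : ε'' ≤ 1 := min_le_left _ _
    have h1 : K * η * (v + ε'') ≤ K * η * (v + 1) := by
      apply mul_le_mul_of_nonneg_left (by linarith) (by positivity)
    have hη2 : η ≤ M * b / (4 * K * (v + 1)) := min_le_right _ _
    have h2 : K * η * (v + 1) ≤ K * (M * b / (4 * K * (v + 1))) * (v + 1) :=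
      mul_le_mul_of_nonneg_right (mul_le_mul_of_nonneg_left hη2 (by positivity)) hv1pos.le
    have h3 : K * (M * b / (4 * K * (v + 1))) * (v + 1) = M * b / 4 := by
      field_simp
    linarith
  have hB : 2 * ε'' ≤ M * b / 4 := by
    have := min_le_right (1:ℝ) (M * b / 8)
    linarith
  have hMb : 0 < M * b := mul_pos hMpos hbpos
  linarith

/-- Mather's chain lemma: in a compact connected subset `X` of `ℝ^d`, `d ≥ 2`,
any two points can be joined by a chain in `X` with `∑ ‖x_{i+1} - x_i‖^d < ε`. -/
theorem mather_chain_lemma {d : ℕ} (hd : 2 ≤ d)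
    (X : Set (EuclideanSpace ℝ (Fin d))) (hXc : IsCompact X) (hXconn : IsConnected X)
    (x y : EuclideanSpace ℝ (Fin d)) (hx : x ∈ X) (hy : y ∈ X) (ε : ℝ) (hε : 0 < ε) :
    ∃ (k : ℕ) (c : ℕ → EuclideanSpace ℝ (Fin d)),
      c 0 = x ∧ c k = y ∧ (∀ i ≤ k, c i ∈ X) ∧
      ∑ i ∈ Finset.range k, ‖c (i + 1) - c i‖ ^ d < ε := by
  have hMz : matherH d X x y = 0 := matherH_main hd X hXc hXconn x y hx hy
  have hne : (insert (1:ℝ) (matherCosts d X x y)).Nonempty := ⟨1, Set.mem_insert _ _⟩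
  have heq : sInf (insert (1:ℝ) (matherCosts d X x y)) = 0 := hMz
  have hlt : sInf (insert (1:ℝ) (matherCosts d X x y)) < min 1 ε := by
    rw [heq]
    exact lt_min one_pos hε
  obtain ⟨a, ha, halt⟩ := exists_lt_of_csInf_lt hne hlt
  have ha1 : a < 1 := halt.trans_le (min_le_left _ _)
  rcases ha with rfl | ha
  · exact absurd ha1 (lt_irrefl 1)
  · obtain ⟨k, c, h0, hk, hmem, hsum⟩ := ha
    refine ⟨k, c, h0, hk, hmem, ?_⟩
    rw [← hsum]
    exact halt.trans_le (min_le_right _ _)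

end MatherAux
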